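/- 0-1 ILP forcing gadget: let A ∈ ℤ^{m×ℓ} and b ∈ ℤ^m, and define the (m+1)×(ℓ+1) matrix M by M_{i,k} = A_{i,k} for i ≤ m, k ≤ ℓ; M_{i,ℓ+1} = −b_i for i ≤ m; M_{m+1,k} = −1/(ℓ+1) for k ≤ ℓ; and M_{m+1,ℓ+1} = 1. Then there exists x ∈ {0,1}^ℓ with Ax ≥ b (componentwise) if and only if there exists a nonempty subset S ⊆ {1,...,ℓ+1} such that Σ_{k∈S} M_{i,k} ≥ 0 for every row i ∈ {1,...,m+1}. -/

import Mathlib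

private def castSuccEmb' (ℓ : ℕ) : Fin ℓ ↪ Fin (ℓ + 1) :=
  ⟨Fin.castSucc, Fin.castSucc_injective ℓ⟩

@[simp] private lemma castSuccEmb'_apply (ℓ : ℕ) (k : Fin ℓ) :
    castSuccEmb' ℓ k = k.castSucc := rfl

theorem ilp_forcing_gadget_correct
    (m ℓ : ℕ) (A : Fin m → Fin ℓ → ℤ) (b : Fin m → ℤ)
    (M : Fin (m + 1) → Fin (ℓ + 1) → ℚ)
    (hA : ∀ (i : Fin m) (k : Fin ℓ), M i.castSucc k.castSucc = (A i k : ℚ))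
    (hb : ∀ i : Fin m, M i.castSucc (Fin.last ℓ) = -(b i : ℚ))
    (hrow : ∀ k : Fin ℓ, M (Fin.last m) k.castSucc = -(1 / ((ℓ : ℚ) + 1)))
    (hone : M (Fin.last m) (Fin.last ℓ) = 1) :
    (∃ x : Fin ℓ → Bool,
        ∀ i : Fin m, b i ≤ ∑ k : Fin ℓ, A i k * (if x k then 1 else 0))
      ↔ (∃ S : Finset (Fin (ℓ + 1)), S.Nonempty ∧
          ∀ i : Fin (m + 1), 0 ≤ ∑ k ∈ S, M i k) := by
  have hlast_not : ∀ T : Finset (Fin ℓ), Fin.last ℓ ∉ T.map (castSuccEmb' ℓ) := by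
    intro T h
    simp only [Finset.mem_map, castSuccEmb'_apply] at h
    obtain ⟨k, -, hk⟩ := h
    exact absurd hk (Fin.castSucc_lt_last k).ne
  -- key sum decomposition
  have hsum : ∀ (i : Fin (m+1)) (T : Finset (Fin ℓ)),
      ∑ j ∈ insert (Fin.last ℓ) (T.map (castSuccEmb' ℓ)), M i j
        = M i (Fin.last ℓ) + ∑ k ∈ T, M i k.castSucc := by
    intro i T
    rw [Finset.sum_insert (hlast_not T), Finset.sum_map]
    simp
  constructor
  · rintro ⟨x, hx⟩
    refine ⟨insert (Fin.last ℓ) ((Finset.univ.filter fun k => x k).map (castSuccEmb' ℓ)),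
      ⟨_, Finset.mem_insert_self _ _⟩, ?_⟩
    intro i
    rw [hsum]
    induction i using Fin.lastCases with
    | last =>
      rw [hone]
      have hcard : ((Finset.univ.filter fun k => x k = true).card : ℚ) ≤ ℓ := by
        have := Finset.card_filter_le (Finset.univ : Finset (Fin ℓ)) (fun k => x k = true)
        simp only [Finset.card_univ, Fintype.card_fin] at this
        exact_mod_cast this
      have hpos : (0:ℚ) < (ℓ:ℚ) + 1 := by positivity
      rw [Finset.sum_congr rfl fun k _ => hrow k, Finset.sum_const, nsmul_eq_mul,
        mul_neg, mul_one_div]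
      have hd : ((Finset.univ.filter fun k => x k = true).card : ℚ) / ((ℓ:ℚ)+1) ≤ 1 :=
        (div_le_one hpos).mpr (by linarith)
      linarith
    | cast i0 =>
      rw [hb]
      have h1 : ∑ k ∈ Finset.univ.filter (fun k => x k = true), M i0.castSucc k.castSucc
          = ∑ k ∈ Finset.univ.filter (fun k => x k = true), (A i0 k : ℚ) :=
        Finset.sum_congr rfl fun k _ => hA i0 k
      have h2 : ∑ k ∈ Finset.univ.filter (fun k => x k = true), (A i0 k : ℚ)
          = ((∑ k : Fin ℓ, A i0 k * (if x k then 1 else 0) : ℤ) : ℚ) := by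
        push_cast
        rw [Finset.sum_filter]
        exact Finset.sum_congr rfl fun k _ => by by_cases h : x k <;> simp [h]
      rw [h1, h2]
      have := hx i0
      have : ((b i0 : ℚ)) ≤ ((∑ k : Fin ℓ, A i0 k * (if x k then 1 else 0) : ℤ) : ℚ) := by
        exact_mod_cast this
      linarith
  · rintro ⟨S, hne, hS⟩
    have hlast : Fin.last ℓ ∈ S := by
      by_contra h
      have h0 := hS (Fin.last m)
      have heq : ∑ j ∈ S, M (Fin.last m) j = S.card * (-(1 / ((ℓ:ℚ)+1))) := by
        rw [Finset.sum_congr rfl (fun j hj => ?_), Finset.sum_const, nsmul_eq_mul]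
        have hjne : j ≠ Fin.last ℓ := fun e => h (e ▸ hj)
        rw [← Fin.castSucc_castPred j hjne, hrow]
      rw [heq] at h0
      have hcpos : (0:ℚ) < S.card := by
        exact_mod_cast Finset.card_pos.mpr hne
      have hpos : (0:ℚ) < 1 / ((ℓ:ℚ)+1) := by positivity
      nlinarith
    refine ⟨fun k => decide (k.castSucc ∈ S), ?_⟩
    intro i0
    have hSeq : S = insert (Fin.last ℓ)
        ((Finset.univ.filter fun k : Fin ℓ => k.castSucc ∈ S).map (castSuccEmb' ℓ)) := by
      ext j
      simp only [Finset.mem_insert, Finset.mem_map, Finset.mem_filter, Finset.mem_univ,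
        true_and, castSuccEmb'_apply]
      constructor
      · intro hj
        rcases eq_or_ne j (Fin.last ℓ) with rfl | hne
        · exact Or.inl rfl
        · exact Or.inr ⟨j.castPred hne, by rw [Fin.castSucc_castPred]; exact hj,
            Fin.castSucc_castPred j hne⟩
      · rintro (rfl | ⟨k, hk, rfl⟩)
        · exact hlast
        · exact hk
    have h0 := hS i0.castSucc
    rw [hSeq, hsum, hb] at h0
    have h1 : ∑ k ∈ Finset.univ.filter (fun k : Fin ℓ => k.castSucc ∈ S), M i0.castSucc k.castSucc
        = ((∑ k : Fin ℓ, A i0 k * (if decide (k.castSucc ∈ S) then 1 else 0) : ℤ) : ℚ) := by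
      push_cast
      rw [Finset.sum_filter]
      refine Finset.sum_congr rfl fun k _ => ?_
      by_cases h : k.castSucc ∈ S <;> simp [h, hA i0 k]
    rw [h1] at h0
    have : (0:ℚ) ≤ ((∑ k : Fin ℓ, A i0 k * (if decide (k.castSucc ∈ S) then 1 else 0) : ℤ) : ℚ) - (b i0 : ℚ) := by linarith
    have := sub_nonneg.mp this
    exact_mod_cast this
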